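/- arXiv:2012.15293 — 3 statements merged into one kernel-verified Lean document; each statement's English description precedes it below -/
import Mathlib

section
/- Let V be a vector space, n = km for positive integers k, m, and let {v_A : A ⊆ [n], |A| = m} be a family of vectors in V. Then ∑_{|A|=m} v_A = (1/k^m) · C(km, m) · (1/|Π_{k,m}|) · ∑_{π=(B_1,...,B_m) ∈ Π_{k,m}} ∑_{i_1 ∈ B_1} ... ∑_{i_m ∈ B_m} v_{{i_1,...,i_m}}. -/
open Finset

/-- The set of ordered partitions of `[k*m]` into `m` pairwise disjoint blocks of
size `k` whose union is everything. -/
def orderedPartitions (k m : ℕ) : Finset (Fin m → Finset (Fin (k * m))) :=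
  Finset.univ.filter fun B =>
    (∀ l, (B l).card = k) ∧ (∀ l l', l ≠ l' → Disjoint (B l) (B l')) ∧
      Finset.univ.biUnion B = Finset.univ

section helpers

variable {k m : ℕ}

private lemma mem_op {π : Fin m → Finset (Fin (k * m))} :
    π ∈ orderedPartitions k m ↔
      (∀ l, (π l).card = k) ∧ (∀ l l', l ≠ l' → Disjoint (π l) (π l')) ∧
        Finset.univ.biUnion π = Finset.univ := by
  simp [orderedPartitions]

private lemma trans_inj {π : Fin m → Finset (Fin (k * m))}
    (hd : ∀ l l', l ≠ l' → Disjoint (π l) (π l'))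
    {i : Fin m → Fin (k * m)} (hi : ∀ l, i l ∈ π l) : Function.Injective i := by
  intro a b hab
  by_contra hne
  exact (Finset.disjoint_left.mp (hd a b hne)) (hi a) (hab ▸ hi b)

private lemma image_inj {π : Fin m → Finset (Fin (k * m))}
    (hd : ∀ l l', l ≠ l' → Disjoint (π l) (π l')) :
    Set.InjOn (fun i : Fin m → Fin (k * m) => Finset.image i Finset.univ)
      (Fintype.piFinset (fun l => π l)) := by
  intro i hi j hj hij
  have hi' := Fintype.mem_piFinset.mp hi
  have hj' := Fintype.mem_piFinset.mp hj
  funext l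
  have hij' : Finset.image i Finset.univ = Finset.image j Finset.univ := hij
  have hmem : j l ∈ Finset.image i Finset.univ := by
    rw [hij']; exact mem_image_of_mem _ (mem_univ l)
  obtain ⟨l', -, hl'⟩ := mem_image.mp hmem
  rcases eq_or_ne l' l with rfl | hne
  · exact hl'
  · have h1 : i l' ∈ π l := by rw [hl']; exact hj' l
    exact absurd h1 (Finset.disjoint_left.mp (hd l' l hne) (hi' l'))

private lemma image_piFinset_eq {π : Fin m → Finset (Fin (k * m))}
    (hd : ∀ l l', l ≠ l' → Disjoint (π l) (π l')) :
    (Fintype.piFinset (fun l => π l)).image (fun i => Finset.image i Finset.univ)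
      = (Finset.univ.filter fun A : Finset (Fin (k * m)) => A.card = m).filter
          (fun A => ∀ l, (A ∩ π l).Nonempty) := by
  ext A
  simp only [mem_image, mem_filter, mem_univ, true_and]
  constructor
  · rintro ⟨i, hi, rfl⟩
    have hi' := Fintype.mem_piFinset.mp hi
    have hinj := trans_inj hd hi'
    refine ⟨?_, fun l => ⟨i l, mem_inter.mpr ⟨mem_image_of_mem _ (mem_univ l), hi' l⟩⟩⟩
    rw [Finset.card_image_of_injective _ hinj, card_univ, Fintype.card_fin]
  · rintro ⟨hcard, hne⟩
    choose i hi using hne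
    have hi1 : ∀ l, i l ∈ A := fun l => (mem_inter.mp (hi l)).1
    have hi2 : ∀ l, i l ∈ π l := fun l => (mem_inter.mp (hi l)).2
    refine ⟨i, Fintype.mem_piFinset.mpr hi2, ?_⟩
    apply Finset.eq_of_subset_of_card_le
    · intro x hx
      obtain ⟨l, -, rfl⟩ := mem_image.mp hx
      exact hi1 l
    · rw [Finset.card_image_of_injective _ (trans_inj hd hi2), card_univ, Fintype.card_fin,
        hcard]

/-- number of ordered partitions of which `A` is a transversal -/
private def Tcount (k m : ℕ) (A : Finset (Fin (k * m))) : ℕ :=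
  ((orderedPartitions k m).filter (fun π => ∀ l, (A ∩ π l).Nonempty)).card

private lemma Tcount_le {A A' : Finset (Fin (k * m))} (σ : Equiv.Perm (Fin (k * m)))
    (hmem : ∀ x, σ x ∈ A' ↔ x ∈ A) : Tcount k m A ≤ Tcount k m A' := by
  classical
  apply Finset.card_le_card_of_injOn (fun π => fun l => (π l).image σ)
  · intro π hπ
    rw [Finset.mem_coe, mem_filter] at hπ ⊢
    obtain ⟨hop, hmeets⟩ := hπ
    obtain ⟨hcard, hd, hu⟩ := mem_op.mp hop
    refine ⟨mem_op.mpr ⟨?_, ?_, ?_⟩, ?_⟩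
    · intro l; rw [Finset.card_image_of_injective _ σ.injective]; exact hcard l
    · intro l l' hll'
      rw [Finset.disjoint_left]
      intro a ha ha'
      obtain ⟨x, hx, rfl⟩ := mem_image.mp ha
      obtain ⟨y, hy, hxy⟩ := mem_image.mp ha'
      have : y = x := σ.injective hxy
      subst this
      exact (Finset.disjoint_left.mp (hd l l' hll')) hx hy
    · rw [← Finset.biUnion_image, hu, Finset.image_univ_of_surjective σ.surjective]
    · intro l
      obtain ⟨x, hx⟩ := hmeets l
      rw [mem_inter] at hx
      exact ⟨σ x, mem_inter.mpr ⟨(hmem x).mpr hx.1, mem_image_of_mem _ hx.2⟩⟩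
  · intro π hπ π' hπ' h
    funext l
    have := congrFun h l
    exact Finset.image_injective σ.injective this

private lemma Tcount_const {A A' : Finset (Fin (k * m))} (hA : A.card = m)
    (hA' : A'.card = m) : Tcount k m A = Tcount k m A' := by
  classical
  have hc : Fintype.card {x // x ∈ A} = Fintype.card {x // x ∈ A'} := by
    simp [Fintype.card_coe, hA, hA']
  have hc' : Fintype.card {x : Fin (k * m) // ¬x ∈ A} =
      Fintype.card {x : Fin (k * m) // ¬x ∈ A'} := by
    rw [Fintype.card_subtype_compl, Fintype.card_subtype_compl, hc]
  set e := Fintype.equivOfCardEq hc with he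
  set f := Fintype.equivOfCardEq hc' with hf
  set σ : Equiv.Perm (Fin (k * m)) := Equiv.subtypeCongr e f with hσ
  have hmem : ∀ x, σ x ∈ A' ↔ x ∈ A := by
    intro x
    by_cases h : x ∈ A
    · have : σ x = (e ⟨x, h⟩ : {x // x ∈ A'}) := by
        simp [hσ, Equiv.subtypeCongr, Equiv.sumCompl_symm_apply_of_pos h]
      rw [this]
      exact iff_of_true (e ⟨x, h⟩).2 h
    · have : σ x = (f ⟨x, h⟩ : {x : Fin (k * m) // ¬x ∈ A'}) := by
        simp [hσ, Equiv.subtypeCongr, Equiv.sumCompl_symm_apply_of_neg h]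
      rw [this]
      exact iff_of_false (f ⟨x, h⟩).2 h
  have hmem' : ∀ x, σ.symm x ∈ A ↔ x ∈ A' := by
    intro x
    rw [← hmem (σ.symm x), Equiv.apply_symm_apply]
  exact le_antisymm (Tcount_le σ hmem) (Tcount_le σ.symm hmem')

private lemma op_nonempty (hk : 0 < k) : (orderedPartitions k m).Nonempty := by
  classical
  have : NeZero k := ⟨hk.ne'⟩
  refine ⟨fun l => Finset.univ.image (fun j : Fin k => finProdFinEquiv (j, l)),
    mem_op.mpr ⟨?_, ?_, ?_⟩⟩
  · intro l
    rw [Finset.card_image_of_injective, card_univ, Fintype.card_fin]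
    intro a b hab
    have := finProdFinEquiv.injective hab
    exact (Prod.mk.injEq _ _ _ _ ▸ this).1
  · intro l l' hll'
    rw [Finset.disjoint_left]
    rintro a ha ha'
    obtain ⟨x, -, rfl⟩ := mem_image.mp ha
    obtain ⟨y, -, hy⟩ := mem_image.mp ha'
    have := finProdFinEquiv.injective hy
    exact hll' ((Prod.mk.injEq _ _ _ _ ▸ this).2).symm
  · refine Finset.eq_univ_iff_forall.mpr fun x => ?_
    refine mem_biUnion.mpr ⟨(finProdFinEquiv.symm x).2, mem_univ _,
      mem_image.mpr ⟨(finProdFinEquiv.symm x).1, mem_univ _, ?_⟩⟩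
    rw [Prod.mk.eta, Equiv.apply_symm_apply]

private lemma allm_card :
    (Finset.univ.filter fun A : Finset (Fin (k * m)) => A.card = m).card
      = (k * m).choose m := by
  classical
  have : (Finset.univ.filter fun A : Finset (Fin (k * m)) => A.card = m)
      = Finset.powersetCard m (Finset.univ : Finset (Fin (k * m))) := by
    rw [Finset.powersetCard_eq_filter, Finset.powerset_univ]
  rw [this, Finset.card_powersetCard, card_univ, Fintype.card_fin]

private lemma count_eq :
    (orderedPartitions k m).card * k ^ m
      = ∑ A ∈ Finset.univ.filter (fun A : Finset (Fin (k * m)) => A.card = m),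
          Tcount k m A := by
  classical
  have h1 : ∀ π ∈ orderedPartitions k m,
      k ^ m = ∑ A ∈ Finset.univ.filter (fun A : Finset (Fin (k * m)) => A.card = m),
        if (∀ l, (A ∩ π l).Nonempty) then 1 else 0 := by
    intro π hπ
    obtain ⟨hcard, hd, hu⟩ := mem_op.mp hπ
    calc k ^ m = (Fintype.piFinset fun l => π l).card := by
          rw [Fintype.card_piFinset]
          simp [hcard]
      _ = ((Fintype.piFinset fun l => π l).image
            (fun i => Finset.image i Finset.univ)).card :=
          (Finset.card_image_of_injOn (image_inj hd)).symm
      _ = _ := by rw [image_piFinset_eq hd, Finset.card_filter]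
  calc (orderedPartitions k m).card * k ^ m
      = ∑ _π ∈ orderedPartitions k m, k ^ m := by rw [Finset.sum_const, smul_eq_mul]
    _ = ∑ π ∈ orderedPartitions k m,
          ∑ A ∈ Finset.univ.filter (fun A : Finset (Fin (k * m)) => A.card = m),
            if (∀ l, (A ∩ π l).Nonempty) then 1 else 0 := Finset.sum_congr rfl h1
    _ = ∑ A ∈ Finset.univ.filter (fun A : Finset (Fin (k * m)) => A.card = m),
          ∑ π ∈ orderedPartitions k m,
            if (∀ l, (A ∩ π l).Nonempty) then 1 else 0 := Finset.sum_comm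
    _ = _ := by
        refine Finset.sum_congr rfl fun A _ => ?_
        rw [Tcount, Finset.card_filter]

end helpers

theorem stmt_1 {V : Type*} [AddCommGroup V] [Module ℝ V] (k m : ℕ) (hk : 0 < k) (hm : 0 < m)
    (v : Finset (Fin (k * m)) → V) :
    ∑ A ∈ Finset.univ.filter (fun A : Finset (Fin (k * m)) => A.card = m), v A
      = ((((k : ℝ) ^ m)⁻¹ * ((k * m).choose m : ℝ)) * ((orderedPartitions k m).card : ℝ)⁻¹) •
          ∑ π ∈ orderedPartitions k m, ∑ i ∈ Fintype.piFinset (fun l => π l),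
            v (Finset.image i Finset.univ) := by
  classical
  -- pick a reference m-set
  have hmn : m ≤ k * m := Nat.le_mul_of_pos_left m hk
  obtain ⟨A₀, -, hA₀⟩ := Finset.exists_subset_card_eq
    (le_trans hmn (le_of_eq (by rw [card_univ, Fintype.card_fin])) :
      m ≤ (Finset.univ : Finset (Fin (k * m))).card)
  -- rewrite inner sums
  have step1 : ∀ π ∈ orderedPartitions k m,
      ∑ i ∈ Fintype.piFinset (fun l => π l), v (Finset.image i Finset.univ)
        = ∑ A ∈ (Finset.univ.filter fun A : Finset (Fin (k * m)) => A.card = m),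
            if (∀ l, (A ∩ π l).Nonempty) then v A else 0 := by
    intro π hπ
    obtain ⟨hcard, hd, hu⟩ := mem_op.mp hπ
    rw [← Finset.sum_filter, ← image_piFinset_eq hd, Finset.sum_image]
    intro i hi j hj hij
    exact image_inj hd hi hj hij
  have step2 : ∑ π ∈ orderedPartitions k m, ∑ i ∈ Fintype.piFinset (fun l => π l),
        v (Finset.image i Finset.univ)
      = (Tcount k m A₀ : ℝ) •
          ∑ A ∈ (Finset.univ.filter fun A : Finset (Fin (k * m)) => A.card = m), v A := by
    rw [Finset.sum_congr rfl step1, Finset.sum_comm, Finset.smul_sum]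
    refine Finset.sum_congr rfl fun A hA => ?_
    have hAc : A.card = m := (Finset.mem_filter.mp hA).2
    rw [← Finset.sum_filter, Finset.sum_const]
    rw [show ((orderedPartitions k m).filter fun π => ∀ l, (A ∩ π l).Nonempty).card
        = Tcount k m A₀ from (Tcount_const hAc hA₀ : Tcount k m A = Tcount k m A₀)]
    rw [← Nat.cast_smul_eq_nsmul ℝ]
  rw [step2, smul_smul]
  -- counting identity
  have hcount : (orderedPartitions k m).card * k ^ m = (k * m).choose m * Tcount k m A₀ := by
    rw [count_eq]
    rw [Finset.sum_congr rfl fun A hA =>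
      (Tcount_const (Finset.mem_filter.mp hA).2 hA₀ : Tcount k m A = Tcount k m A₀)]
    rw [Finset.sum_const, smul_eq_mul, allm_card]
  have hP : 0 < (orderedPartitions k m).card := Finset.card_pos.mpr (op_nonempty hk)
  have hPne : ((orderedPartitions k m).card : ℝ) ≠ 0 := Nat.cast_ne_zero.mpr hP.ne'
  have hkne : ((k : ℝ) ^ m) ≠ 0 := pow_ne_zero m (Nat.cast_ne_zero.mpr hk.ne')
  have hcountR : ((orderedPartitions k m).card : ℝ) * (k : ℝ) ^ m
      = ((k * m).choose m : ℝ) * (Tcount k m A₀ : ℝ) := by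
    exact_mod_cast congrArg (Nat.cast : ℕ → ℝ) hcount
  have hscal : ((k : ℝ) ^ m)⁻¹ * ((k * m).choose m : ℝ) *
      ((orderedPartitions k m).card : ℝ)⁻¹ * (Tcount k m A₀ : ℝ) = 1 := by
    field_simp
    linarith [hcountR]
  rw [hscal, one_smul]
end

section
/- Let X be a normed space over ℂ, ‖·‖ any norm on ℂⁿ, P : ℂⁿ → X an m-homogeneous polynomial, and M its associated symmetric m-linear map. Then sup over unit vectors z^{(1)},...,z^{(m)} of ‖M(z^{(1)},...,z^{(m)})‖_X is at most e^m times sup over unit vectors z of ‖P(z)‖_X, and sup_{‖z‖≤1} ‖P(z)‖_X ≤ sup_{‖z^{(k)}‖≤1} ‖M(z^{(1)},...,z^{(m)})‖_X. -/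
open Finset

private def sgn : Bool → ℂ := fun b => if b then 1 else -1

private lemma sgn_sq (b : Bool) : sgn b * sgn b = 1 := by cases b <;> simp [sgn]

private lemma sgn_abs (b : Bool) : ‖sgn b‖ = 1 := by cases b <;> simp [sgn]

private lemma sgn_not (b : Bool) : sgn (!b) = - sgn b := by cases b <;> simp [sgn]

/-- Polarization identity for symmetric multilinear maps. -/
private lemma polarization {X : Type*} [AddCommGroup X] [Module ℂ X]
    (n m : ℕ) (M : MultilinearMap ℂ (fun _ : Fin m => (Fin n → ℂ)) X)
    (hsym : ∀ (σ : Equiv.Perm (Fin m)) (v : Fin m → (Fin n → ℂ)), M (v ∘ σ) = M v)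
    (v : Fin m → (Fin n → ℂ)) :
    ((2 ^ m * m.factorial : ℕ) : ℂ) • M v =
      ∑ ε : Fin m → Bool, (∏ i, sgn (ε i)) • M (fun _ => ∑ j, sgn (ε j) • v j) := by
  have expand : ∀ ε : Fin m → Bool,
      M (fun _ => ∑ j, sgn (ε j) • v j)
        = ∑ r : Fin m → Fin m, (∏ i, sgn (ε (r i))) • M (v ∘ r) := by
    intro ε
    rw [M.map_sum (g := fun _ j => sgn (ε j) • v j)]
    refine Fintype.sum_congr _ _ (fun r => ?_)
    exact M.map_smul_univ (fun i => sgn (ε (r i))) (v ∘ r)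
  refine Eq.symm ?_
  calc ∑ ε : Fin m → Bool, (∏ i, sgn (ε i)) • M (fun _ => ∑ j, sgn (ε j) • v j)
      = ∑ r : Fin m → Fin m,
          (∑ ε : Fin m → Bool, (∏ i, sgn (ε i)) * ∏ i, sgn (ε (r i))) • M (v ∘ r) := by
        simp_rw [expand, Finset.smul_sum, smul_smul]
        rw [Finset.sum_comm]
        simp_rw [Finset.sum_smul]
    _ = ((2 ^ m * m.factorial : ℕ) : ℂ) • M v := by
        rw [← Finset.sum_filter_add_sum_filter_not Finset.univ Function.Bijective]
        have h0 : ∀ r ∈ Finset.univ.filter (fun r : Fin m → Fin m => ¬ Function.Bijective r),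
            (∑ ε : Fin m → Bool, (∏ i, sgn (ε i)) * ∏ i, sgn (ε (r i))) • M (v ∘ r) = 0 := by
          intro r hr
          rw [Finset.mem_filter] at hr
          have hnb := hr.2
          have hns : ¬ Function.Surjective r := by
            intro hs
            exact hnb ⟨Finite.injective_iff_surjective.mpr hs, hs⟩
          rw [Function.Surjective] at hns
          push_neg at hns
          obtain ⟨j₀, hj₀⟩ := hns
          have : (∑ ε : Fin m → Bool, (∏ i, sgn (ε i)) * ∏ i, sgn (ε (r i))) = 0 := by
            refine Finset.sum_involution (fun ε _ => Function.update ε j₀ (!ε j₀))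
              (fun ε _ => ?_) (fun ε _ _ => ?_) (fun ε _ => Finset.mem_univ _)
              (fun ε _ => ?_)
            · have h1 : (∏ i, sgn (Function.update ε j₀ (!ε j₀) i)) = - ∏ i, sgn (ε i) := by
                rw [← Finset.prod_mul_prod_compl {j₀}
                  (f := fun i => sgn (Function.update ε j₀ (!ε j₀) i)),
                  ← Finset.prod_mul_prod_compl {j₀} (f := fun i => sgn (ε i))]
                have hA : ∏ i ∈ ({j₀}ᶜ : Finset (Fin m)), sgn (Function.update ε j₀ (!ε j₀) i)
                    = ∏ i ∈ ({j₀}ᶜ : Finset (Fin m)), sgn (ε i) :=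
                  Finset.prod_congr rfl (fun i hi => by
                    rw [Function.update_of_ne (by simpa using hi)])
                rw [hA, Finset.prod_singleton, Finset.prod_singleton,
                  Function.update_self, sgn_not]
                ring
              have h2 : (∏ i, sgn (Function.update ε j₀ (!ε j₀) (r i))) = ∏ i, sgn (ε (r i)) := by
                refine Finset.prod_congr rfl (fun i _ => ?_)
                rw [Function.update_of_ne (hj₀ i)]
              rw [h1, h2]; ring
            · intro h
              have := congrFun h j₀
              simp at this
            · ext i
              by_cases hij : i = j₀
              · subst hij; simp
              · simp [Function.update_of_ne hij]
          rw [this, zero_smul]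
        rw [Finset.sum_eq_zero h0, add_zero]
        have hval : ∀ r ∈ Finset.univ.filter (fun r : Fin m → Fin m => Function.Bijective r),
            (∑ ε : Fin m → Bool, (∏ i, sgn (ε i)) * ∏ i, sgn (ε (r i))) • M (v ∘ r)
              = ((2 ^ m : ℕ) : ℂ) • M v := by
          intro r hr
          rw [Finset.mem_filter] at hr
          have hb := hr.2
          have e : Equiv.Perm (Fin m) := Equiv.ofBijective r hb
          have hM : M (v ∘ r) = M v := by
            have := hsym (Equiv.ofBijective r hb) v
            simpa using this
          have hc : (∑ ε : Fin m → Bool, (∏ i, sgn (ε i)) * ∏ i, sgn (ε (r i)))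
              = ((2 ^ m : ℕ) : ℂ) := by
            have : ∀ ε : Fin m → Bool,
                (∏ i, sgn (ε i)) * ∏ i, sgn (ε (r i)) = 1 := by
              intro ε
              have : (∏ i, sgn (ε (r i))) = ∏ i, sgn (ε i) :=
                (Equiv.ofBijective r hb).prod_comp (fun i => sgn (ε i))
              rw [this, ← Finset.prod_mul_distrib]
              simp [sgn_sq]
            rw [Finset.sum_congr rfl (fun ε _ => this ε)]
            simp [Fintype.card_fun]
          rw [hc, hM]
        rw [Finset.sum_congr rfl hval, Finset.sum_const]
        have hcard : (Finset.univ.filter (fun r : Fin m → Fin m => Function.Bijective r)).card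
            = m.factorial := by
          have hp : m.factorial = Fintype.card (Equiv.Perm (Fin m)) := by
            simp [Fintype.card_perm]
          rw [hp, Fintype.card, Finset.card_bij
            (fun (r : Fin m → Fin m) hr => Equiv.ofBijective r (Finset.mem_filter.mp hr).2)]
          · intro r hr; exact Finset.mem_univ _
          · intro r₁ h₁ r₂ h₂ h
            exact congrArg (fun e : Equiv.Perm (Fin m) => (e : Fin m → Fin m)) h
          · intro e he
            refine ⟨(e : Fin m → Fin m), Finset.mem_filter.mpr ⟨Finset.mem_univ _, e.bijective⟩, ?_⟩
            ext i; simp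
        rw [hcard, ← Nat.cast_smul_eq_nsmul ℂ, smul_smul]
        congr 1
        push_cast
        ring

/-- Comparison between the sup of an `m`-homogeneous polynomial `P(z) = M(z,…,z)`
and its associated symmetric `m`-linear map `M` over the unit ball of an
arbitrary norm `N` on `ℂⁿ`: `sup P ≤ sup M ≤ eᵐ sup P`, phrased via upper
bounds. -/
theorem stmt_10 {X : Type*} [NormedAddCommGroup X] [NormedSpace ℂ X]
    (n m : ℕ) (hm : 0 < m)
    (M : MultilinearMap ℂ (fun _ : Fin m => (Fin n → ℂ)) X)
    (hsym : ∀ (σ : Equiv.Perm (Fin m)) (v : Fin m → (Fin n → ℂ)), M (v ∘ σ) = M v)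
    (N : (Fin n → ℂ) → ℝ)
    (hadd : ∀ y z, N (y + z) ≤ N y + N z)
    (hsmul : ∀ (a : ℂ) z, N (a • z) = ‖a‖ * N z)
    (hpos : ∀ z, z ≠ 0 → 0 < N z) :
    (∀ C : ℝ, (∀ v : Fin m → (Fin n → ℂ), (∀ i, N (v i) ≤ 1) → ‖M v‖ ≤ C) →
        ∀ z, N z ≤ 1 → ‖M (fun _ => z)‖ ≤ C) ∧
      (∀ C : ℝ, 0 ≤ C → (∀ z, N z ≤ 1 → ‖M (fun _ => z)‖ ≤ C) →
        ∀ v : Fin m → (Fin n → ℂ), (∀ i, N (v i) ≤ 1) →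
          ‖M v‖ ≤ Real.exp 1 ^ m * C) := by
  have hN0 : N 0 = 0 := by
    have := hsmul 0 0
    simpa using this
  constructor
  · intro C h z hz
    exact h (fun _ => z) (fun _ => hz)
  · intro C hC hP v hv
    -- bound ‖M (fun _ => w)‖ ≤ N w ^ m * C for suitable w; first the key estimate
    have key : ∀ ε : Fin m → Bool, ‖M (fun _ => ∑ j, sgn (ε j) • v j)‖ ≤ (m : ℝ) ^ m * C := by
      intro ε
      set w : Fin n → ℂ := ∑ j, sgn (ε j) • v j with hw
      have hNw : N w ≤ (m : ℝ) := by
        calc N w ≤ ∑ j : Fin m, N (sgn (ε j) • v j) :=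
              Finset.le_sum_of_subadditive N hN0.le hadd _ _
          _ ≤ ∑ _j : Fin m, 1 := Finset.sum_le_sum (fun j _ => by
              rw [hsmul, sgn_abs, one_mul]; exact hv j)
          _ = (m : ℝ) := by simp
      set u : Fin n → ℂ := ((m : ℂ))⁻¹ • w with hu
      have hmne : (m : ℂ) ≠ 0 := Nat.cast_ne_zero.mpr hm.ne'
      have hwu : w = (m : ℂ) • u := by
        rw [hu, smul_smul, mul_inv_cancel₀ hmne, one_smul]
      have hNu : N u ≤ 1 := by
        rw [hu, hsmul]
        have : ‖((m : ℂ))⁻¹‖ = (m : ℝ)⁻¹ := by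
          simp [map_inv₀]
        rw [this]
        rw [inv_mul_le_iff₀ (by exact_mod_cast hm)]
        simpa using hNw
      have : M (fun _ => w) = ((m : ℂ) ^ m) • M (fun _ => u) := by
        conv_lhs => rw [hwu]
        rw [show (fun _ : Fin m => (m : ℂ) • u) = fun i => (fun _ : Fin m => (m:ℂ)) i • (fun _ => u) i from rfl,
          M.map_smul_univ]
        simp
      rw [this, norm_smul]
      have : ‖((m : ℂ)) ^ m‖ = (m : ℝ) ^ m := by
        rw [norm_pow]
        simp
      rw [this]
      exact mul_le_mul_of_nonneg_left (hP u hNu) (by positivity)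
    have pol := polarization n m M hsym v
    have hnorm : ((2 ^ m * m.factorial : ℕ) : ℝ) * ‖M v‖ ≤ (2 : ℝ) ^ m * ((m : ℝ) ^ m * C) := by
      have h1 : ‖((2 ^ m * m.factorial : ℕ) : ℂ) • M v‖
          = ((2 ^ m * m.factorial : ℕ) : ℝ) * ‖M v‖ := by
        rw [norm_smul]
        simp
      calc ((2 ^ m * m.factorial : ℕ) : ℝ) * ‖M v‖ = ‖((2 ^ m * m.factorial : ℕ) : ℂ) • M v‖ :=
            h1.symm
        _ = ‖∑ ε : Fin m → Bool, (∏ i, sgn (ε i)) • M (fun _ => ∑ j, sgn (ε j) • v j)‖ := by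
            rw [pol]
        _ ≤ ∑ ε : Fin m → Bool, ‖(∏ i, sgn (ε i)) • M (fun _ => ∑ j, sgn (ε j) • v j)‖ :=
            norm_sum_le _ _
        _ ≤ ∑ _ε : Fin m → Bool, (m : ℝ) ^ m * C := by
            refine Finset.sum_le_sum (fun ε _ => ?_)
            rw [norm_smul]
            have : ‖∏ i, sgn (ε i)‖ = 1 := by
              rw [norm_prod]
              simp [sgn_abs]
            rw [this, one_mul]
            exact key ε
        _ = (2 : ℝ) ^ m * ((m : ℝ) ^ m * C) := by
            rw [Finset.sum_const]
            simp [Fintype.card_fun]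
    -- conclude ‖M v‖ ≤ (m^m / m!) * C ≤ e^m C
    have hfact : (0 : ℝ) < (m.factorial : ℝ) := by exact_mod_cast m.factorial_pos
    have h2 : ‖M v‖ ≤ (m : ℝ) ^ m / (m.factorial : ℝ) * C := by
      rw [Nat.cast_mul, Nat.cast_pow] at hnorm
      push_cast at hnorm
      have h2m : (0:ℝ) < (2:ℝ)^m := by positivity
      rw [mul_assoc] at hnorm
      have h5 : (m.factorial : ℝ) * ‖M v‖ ≤ (m:ℝ)^m * C := le_of_mul_le_mul_left hnorm h2m
      rw [div_mul_eq_mul_div, le_div_iff₀ hfact]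
      linarith
    refine h2.trans ?_
    have hmm : (m : ℝ) ^ m / (m.factorial : ℝ) ≤ Real.exp 1 ^ m := by
      have h3 : (m : ℝ) ^ m / (m.factorial : ℝ) ≤ Real.exp m := by
        have := Real.sum_le_exp_of_nonneg (x := (m : ℝ)) (by positivity) (m + 1)
        refine le_trans ?_ this
        exact Finset.single_le_sum (f := fun i => (m:ℝ)^i / i.factorial)
          (fun i _ => by positivity) (Finset.self_mem_range_succ m)
      have h4 : Real.exp (m : ℝ) = Real.exp 1 ^ m := by
        rw [← Real.exp_nat_mul]; simp
      rw [← h4]; exact h3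
    exact mul_le_mul_of_nonneg_right hmm hC
end

section
/- Let X be a Banach space, Φ : X → ℝ_{≥0} a convex function with Φ(x) = Φ(−x) for all x, P : ℂⁿ → X an m-homogeneous tetrahedral polynomial with n = km, and ξ a random vector of n independent symmetric random variables with iid copies ξ^{(1)},...,ξ^{(m)}. Then E Φ((k^m / C(km,m)) P(ξ)) ≤ (1/|Π_{k,m}|) ∑_{π ∈ Π_{k,m}} E Φ(L_π(ξ^{(1)},...,ξ^{(m)})) ≤ E Φ(P(ξ)). -/
open Finset MeasureTheory ProbabilityTheory

namespace Stmt13Aux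

variable {k m : ℕ}

lemma mem_OP {π : Fin m → Finset (Fin (k * m))} :
    π ∈ orderedPartitions k m ↔ (∀ l, (π l).card = k) ∧
      (∀ l l', l ≠ l' → Disjoint (π l) (π l')) ∧
      Finset.univ.biUnion π = Finset.univ := by
  simp [orderedPartitions]

/-- `A` has exactly one element in each block of `π`. -/
def Splits (π : Fin m → Finset (Fin (k * m))) (A : Finset (Fin (k * m))) : Prop :=
  ∀ l, (A ∩ π l).card = 1

instance (π : Fin m → Finset (Fin (k * m))) : DecidablePred (Splits π) := fun _ =>
  inferInstanceAs (Decidable (∀ _, _))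

section blk
variable {π : Fin m → Finset (Fin (k * m))} (hπ : π ∈ orderedPartitions k m)
include hπ

lemma exists_unique_blk (j : Fin (k * m)) : ∃! l, l ∈ (univ : Finset (Fin m)) ∧ j ∈ π l := by
  obtain ⟨hcard, hdisj, hun⟩ := mem_OP.1 hπ
  have : j ∈ Finset.univ.biUnion π := by rw [hun]; exact mem_univ j
  rcases Finset.mem_biUnion.1 this with ⟨l, -, hl⟩
  refine ⟨l, ⟨mem_univ l, hl⟩, ?_⟩
  rintro l' ⟨-, hl'⟩
  by_contra hne
  exact (hdisj l' l hne).forall_ne_finset hl' hl rfl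

/-- the block index of a coordinate -/
def blk (j : Fin (k * m)) : Fin m :=
  Finset.choose (fun l => j ∈ π l) univ (exists_unique_blk hπ j)

lemma mem_blk (j : Fin (k * m)) : j ∈ π (blk hπ j) :=
  (Finset.choose_spec (fun l => j ∈ π l) univ (exists_unique_blk hπ j)).2

lemma blk_eq {j : Fin (k * m)} {l : Fin m} (hj : j ∈ π l) : blk hπ j = l :=
  ((exists_unique_blk hπ j).unique ⟨mem_univ _, mem_blk hπ j⟩ ⟨mem_univ _, hj⟩)

lemma inj_of_piFinset {i : Fin m → Fin (k * m)} (hi : i ∈ Fintype.piFinset fun l => π l) :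
    Function.Injective i := by
  intro l l' h
  have hl := Fintype.mem_piFinset.1 hi l
  have hl' := Fintype.mem_piFinset.1 hi l'
  by_contra hne
  exact ((mem_OP.1 hπ).2.1 l l' hne).forall_ne_finset hl (h ▸ hl') rfl

lemma blk_apply {i : Fin m → Fin (k * m)} (hi : i ∈ Fintype.piFinset fun l => π l) (l : Fin m) :
    blk hπ (i l) = l :=
  blk_eq hπ (Fintype.mem_piFinset.1 hi l)

lemma image_inter_block {i : Fin m → Fin (k * m)} (hi : i ∈ Fintype.piFinset fun l => π l)
    (l : Fin m) : (Finset.image i univ) ∩ π l = {i l} := by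
  ext j
  simp only [mem_inter, mem_image, mem_univ, true_and, mem_singleton]
  constructor
  · rintro ⟨⟨l', rfl⟩, hj⟩
    have : l' = l := by
      have := blk_apply hπ hi l'
      rw [← this, blk_eq hπ hj]
    rw [this]
  · rintro rfl
    exact ⟨⟨l, rfl⟩, Fintype.mem_piFinset.1 hi l⟩

lemma image_mem_filter {i : Fin m → Fin (k * m)} (hi : i ∈ Fintype.piFinset fun l => π l) :
    Finset.image i univ ∈ univ.filter (fun A => A.card = m ∧ Splits π A) := by
  refine mem_filter.2 ⟨mem_univ _, ?_, fun l => ?_⟩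
  · rw [Finset.card_image_of_injective _ (inj_of_piFinset hπ hi), Finset.card_univ,
      Fintype.card_fin]
  · rw [image_inter_block hπ hi l, Finset.card_singleton]

lemma sum_piFinset_eq {E : Type*} [AddCommMonoid E] (F : Finset (Fin (k * m)) → E) :
    ∑ i ∈ Fintype.piFinset (fun l => π l), F (Finset.image i univ)
      = ∑ A ∈ univ.filter (fun A => A.card = m ∧ Splits π A), F A := by
  refine Finset.sum_bij (fun i _ => Finset.image i univ)
    (fun i hi => image_mem_filter hπ hi) (fun i hi i' hi' h => ?_) (fun A hA => ?_)
    (fun _ _ => rfl)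
  · have h' : Finset.image i univ = Finset.image i' univ := h
    funext l
    have h1 := image_inter_block hπ hi l
    have h2 := image_inter_block hπ hi' l
    rw [h'] at h1
    rw [h1] at h2
    exact Finset.singleton_injective h2
  · obtain ⟨-, hcard, hsplit⟩ := mem_filter.1 hA
    have hne : ∀ l, (A ∩ π l).Nonempty := fun l =>
      Finset.card_pos.1 (by rw [hsplit l]; norm_num)
    have hmem : ∀ l, (A ∩ π l).min' (hne l) ∈ A ∩ π l := fun l => Finset.min'_mem _ _
    have hipf : (fun l => (A ∩ π l).min' (hne l)) ∈ Fintype.piFinset (fun l => π l) :=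
      Fintype.mem_piFinset.2 fun l => (mem_inter.1 (hmem l)).2
    refine ⟨fun l => (A ∩ π l).min' (hne l), hipf, ?_⟩
    apply Finset.eq_of_subset_of_card_le
    · intro j hj
      rcases Finset.mem_image.1 hj with ⟨l, -, rfl⟩
      exact (mem_inter.1 (hmem l)).1
    · rw [hcard, Finset.card_image_of_injective _ (inj_of_piFinset hπ hipf), Finset.card_univ,
        Fintype.card_fin]

lemma card_splits :
    (univ.filter (fun A => A.card = m ∧ Splits π A)).card = k ^ m := by
  have := sum_piFinset_eq hπ (fun _ => (1 : ℕ))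
  simp only [Finset.sum_const, smul_eq_mul, mul_one] at this
  rw [← this, Fintype.card_piFinset]
  simp [(mem_OP.1 hπ).1]

end blk

/-- There is a permutation of the ground type carrying `A` onto `A'`. -/
lemma exists_perm_image {α : Type*} [Fintype α] [DecidableEq α] {A A' : Finset α}
    (h : A.card = A'.card) : ∃ σ : Equiv.Perm α, A.image σ = A' := by
  have hc : Aᶜ.card = A'ᶜ.card := by simp [Finset.card_compl, h]
  let e1 : {a // a ∈ A} ≃ {a // a ∈ A'} := Finset.equivOfCardEq h
  let e2 : {a // a ∈ Aᶜ} ≃ {a // a ∈ A'ᶜ} := Finset.equivOfCardEq hc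
  let e2' : {a // ¬ a ∈ A} ≃ {a // ¬ a ∈ A'} :=
    ((Equiv.subtypeEquivRight (fun a => (Finset.mem_compl (s := A)).symm)).trans e2).trans
      (Equiv.subtypeEquivRight (fun a => Finset.mem_compl (s := A')))
  let σ : Equiv.Perm α :=
    ((Equiv.sumCompl (· ∈ A)).symm.trans (e1.sumCongr e2')).trans (Equiv.sumCompl (· ∈ A'))
  have hσ : ∀ a ∈ A, σ a ∈ A' := by
    intro a ha
    have : (Equiv.sumCompl (· ∈ A)).symm a = Sum.inl ⟨a, ha⟩ :=
      Equiv.sumCompl_symm_apply_of_pos ha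
    simp only [σ, Equiv.trans_apply, this, Equiv.sumCongr_apply, Sum.map_inl,
      Equiv.sumCompl_apply_inl]
    exact (e1 ⟨a, ha⟩).2
  refine ⟨σ, Finset.eq_of_subset_of_card_le ?_ ?_⟩
  · intro j hj
    rcases Finset.mem_image.1 hj with ⟨a, ha, rfl⟩
    exact hσ a ha
  · rw [Finset.card_image_of_injective _ σ.injective, h]

/-- the number of ordered partitions split by a given set -/
def splitCount (k m : ℕ) (A : Finset (Fin (k * m))) : ℕ :=
  ((orderedPartitions k m).filter (fun π => Splits π A)).card

lemma perm_mem_OP {π : Fin m → Finset (Fin (k * m))} (hπ : π ∈ orderedPartitions k m)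
    (σ : Equiv.Perm (Fin (k * m))) :
    (fun l => (π l).image σ) ∈ orderedPartitions k m := by
  obtain ⟨hcard, hdisj, hun⟩ := mem_OP.1 hπ
  refine mem_OP.2 ⟨fun l => by rw [Finset.card_image_of_injective _ σ.injective]; exact hcard l,
    fun l l' hne => ?_, ?_⟩
  · rw [Finset.disjoint_image σ.injective]
    exact hdisj l l' hne
  · ext j
    simp only [Finset.mem_biUnion, mem_univ, true_and, Finset.mem_image, iff_true]
    have : σ.symm j ∈ Finset.univ.biUnion π := by rw [hun]; exact mem_univ _
    rcases Finset.mem_biUnion.1 this with ⟨l, -, hl⟩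
    exact ⟨l, σ.symm j, hl, σ.apply_symm_apply j⟩

lemma splits_perm {π : Fin m → Finset (Fin (k * m))} {A : Finset (Fin (k * m))}
    (σ : Equiv.Perm (Fin (k * m))) (h : Splits π A) :
    Splits (fun l => (π l).image σ) (A.image σ) := by
  intro l
  rw [← Finset.image_inter _ _ σ.injective, Finset.card_image_of_injective _ σ.injective]
  exact h l

lemma splitCount_const {A A' : Finset (Fin (k * m))} (hA : A.card = m) (hA' : A'.card = m) :
    splitCount k m A = splitCount k m A' := by
  obtain ⟨σ, hσ⟩ := exists_perm_image (hA.trans hA'.symm)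
  unfold splitCount
  refine Finset.card_bij (fun π _ => fun l => (π l).image σ) ?_ ?_ ?_
  · intro π hπ
    obtain ⟨h1, h2⟩ := mem_filter.1 hπ
    refine mem_filter.2 ⟨perm_mem_OP h1 σ, ?_⟩
    have := splits_perm σ h2
    rwa [hσ] at this
  · intro π h1 π' h2 h
    have h' : (fun l => (π l).image σ) = fun l => (π' l).image σ := h
    funext l
    have := congrFun h' l
    exact Finset.image_injective σ.injective this
  · intro π' hπ'
    obtain ⟨h1, h2⟩ := mem_filter.1 hπ'
    refine ⟨fun l => (π' l).image σ.symm, mem_filter.2 ⟨perm_mem_OP h1 σ.symm, ?_⟩, ?_⟩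
    · have := splits_perm σ.symm h2
      have hA'' : A'.image σ.symm = A := by
        rw [← hσ, Finset.image_image]
        simp
      rwa [hA''] at this
    · funext l
      show Finset.image σ (Finset.image σ.symm (π' l)) = π' l
      rw [Finset.image_image]
      simp

lemma sum_splitCount (hk : 0 < k) :
    ∑ A ∈ univ.filter (fun A : Finset (Fin (k * m)) => A.card = m), splitCount k m A
      = (orderedPartitions k m).card * k ^ m := by
  unfold splitCount
  simp only [Finset.card_filter]
  rw [Finset.sum_comm]
  have h : ∀ π ∈ orderedPartitions k m,
      (∑ A ∈ univ.filter (fun A : Finset (Fin (k * m)) => A.card = m),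
        if Splits π A then 1 else 0) = k ^ m := by
    intro π hπ
    rw [← Finset.card_filter, Finset.filter_filter]
    exact card_splits hπ
  rw [Finset.sum_congr rfl h, Finset.sum_const, smul_eq_mul]

lemma OP_nonempty (hk : 0 < k) : (orderedPartitions k m).Nonempty := by
  refine ⟨fun l => univ.filter (fun j : Fin (k * m) => (j : ℕ) / k = (l : ℕ)),
    mem_OP.2 ⟨fun l => ?_, fun l l' hne => ?_, ?_⟩⟩
  · have hb : ∀ i : ℕ, i < k → k * (l : ℕ) + i < k * m := by
      intro i hi
      calc k * (l : ℕ) + i < k * (l : ℕ) + k := by omega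
        _ = k * ((l : ℕ) + 1) := by ring
        _ ≤ k * m := Nat.mul_le_mul_left k l.isLt
    refine Finset.card_eq_of_bijective (fun i hi => ⟨k * (l : ℕ) + i, hb i hi⟩) ?_ ?_ ?_
    · intro a ha
      have h : (a : ℕ) / k = (l : ℕ) := by simpa using ha
      refine ⟨(a : ℕ) % k, Nat.mod_lt _ hk, ?_⟩
      apply Fin.ext
      show k * (l : ℕ) + (a : ℕ) % k = (a : ℕ)
      rw [← h, Nat.div_add_mod]
    · intro i hi
      simp [Nat.mul_add_div hk, Nat.div_eq_of_lt hi]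
    · intro i j hi hj h
      have := congrArg Fin.val h
      simp only at this
      omega
  · rw [Finset.disjoint_left]
    intro j hj hj'
    simp only [mem_filter, mem_univ, true_and] at hj hj'
    exact hne (Fin.ext (hj ▸ hj'))
  · ext j
    simp only [Finset.mem_biUnion, mem_univ, true_and, mem_filter, iff_true]
    have hlt : (j : ℕ) / k < m := (Nat.div_lt_iff_lt_mul hk).2 (by
      have := j.isLt
      calc (j : ℕ) < k * m := this
        _ = m * k := mul_comm _ _)
    exact ⟨⟨(j : ℕ) / k, hlt⟩, rfl⟩

lemma card_filter_card_eq :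
    (univ.filter fun A : Finset (Fin (k * m)) => A.card = m).card = (k * m).choose m := by
  have h : (univ.filter fun A : Finset (Fin (k * m)) => A.card = m)
      = Finset.powersetCard m (univ : Finset (Fin (k * m))) := by
    ext A
    simp [Finset.mem_powersetCard, Finset.subset_univ]
  rw [h, Finset.card_powersetCard, Finset.card_univ, Fintype.card_fin]

lemma splitCount_mul (hk : 0 < k) {A : Finset (Fin (k * m))} (hA : A.card = m) :
    splitCount k m A * (k * m).choose m = (orderedPartitions k m).card * k ^ m := by
  have h1 := sum_splitCount (k := k) (m := m) hk
  rw [Finset.sum_congr rfl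
    (fun A' hA' => splitCount_const (mem_filter.1 hA').2 hA)] at h1
  rw [Finset.sum_const, smul_eq_mul, card_filter_card_eq] at h1
  rw [mul_comm, h1]

section algebra

variable {X : Type*} [AddCommGroup X] [Module ℂ X] (x : Finset (Fin (k * m)) → X)

/-- the tetrahedral polynomial -/
def Pfun (z : Fin (k * m) → ℂ) : X :=
  ∑ A ∈ univ.filter (fun A : Finset (Fin (k * m)) => A.card = m), (∏ j ∈ A, z j) • x A

/-- the multilinear form on one partition, evaluated at equal arguments -/
def Lsame (π : Fin m → Finset (Fin (k * m))) (z : Fin (k * m) → ℂ) : X :=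
  ∑ i ∈ Fintype.piFinset (fun l => π l), (∏ l, z (i l)) • x (Finset.image i univ)

variable {π : Fin m → Finset (Fin (k * m))} (hπ : π ∈ orderedPartitions k m)
include hπ

lemma Lsame_eq (z : Fin (k * m) → ℂ) :
    Lsame x π z = ∑ A ∈ univ.filter (fun A => A.card = m ∧ Splits π A),
      (∏ j ∈ A, z j) • x A := by
  rw [← sum_piFinset_eq hπ (fun A => (∏ j ∈ A, z j) • x A)]
  refine Finset.sum_congr rfl fun i hi => ?_
  have : ∏ j ∈ Finset.image i univ, z j = ∏ l, z (i l) :=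
    Finset.prod_image (fun a _ b _ h => inj_of_piFinset hπ hi h)
  rw [this]

omit hπ

lemma avg_Lsame (hk : 0 < k) (z : Fin (k * m) → ℂ) :
    (((k : ℂ) ^ m) / (((k * m).choose m : ℕ) : ℂ)) • Pfun x z
      = (((orderedPartitions k m).card : ℂ))⁻¹ •
          ∑ π ∈ orderedPartitions k m, Lsame x π z := by
  have hOP : (0 : ℕ) < (orderedPartitions k m).card :=
    Finset.card_pos.2 (OP_nonempty hk)
  have hC : (0 : ℕ) < (k * m).choose m :=
    Nat.choose_pos (Nat.le_mul_of_pos_left m hk)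
  have step : ∑ π ∈ orderedPartitions k m, Lsame x π z
      = ∑ A ∈ univ.filter (fun A : Finset (Fin (k * m)) => A.card = m),
          (splitCount k m A : ℂ) • ((∏ j ∈ A, z j) • x A) := by
    rw [Finset.sum_congr rfl (fun π hπ => Lsame_eq x hπ z)]
    have hf : ∀ π : Fin m → Finset (Fin (k * m)),
        (univ.filter (fun A : Finset (Fin (k * m)) => A.card = m ∧ Splits π A))
          = (univ.filter (fun A : Finset (Fin (k * m)) => A.card = m)).filter
              (Splits π) := by
      intro π; rw [Finset.filter_filter]
    calc ∑ π ∈ orderedPartitions k m,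
          ∑ A ∈ univ.filter (fun A => A.card = m ∧ Splits π A), (∏ j ∈ A, z j) • x A
        = ∑ π ∈ orderedPartitions k m,
            ∑ A ∈ univ.filter (fun A : Finset (Fin (k * m)) => A.card = m),
              if Splits π A then (∏ j ∈ A, z j) • x A else 0 := by
          refine Finset.sum_congr rfl fun π _ => ?_
          rw [hf π, Finset.sum_filter]
      _ = ∑ A ∈ univ.filter (fun A : Finset (Fin (k * m)) => A.card = m),
            ∑ π ∈ orderedPartitions k m,
              if Splits π A then (∏ j ∈ A, z j) • x A else 0 := Finset.sum_comm
      _ = _ := by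
          refine Finset.sum_congr rfl fun A _ => ?_
          rw [← Finset.sum_filter, Finset.sum_const]
          rw [← Nat.cast_smul_eq_nsmul ℂ]
          rfl
  rw [step, Pfun, Finset.smul_sum, Finset.smul_sum]
  refine Finset.sum_congr rfl fun A hA => ?_
  rw [smul_smul, smul_smul, smul_smul]
  congr 1
  have hmul := splitCount_mul hk (mem_filter.1 hA).2
  have hmulC : (splitCount k m A : ℂ) * (((k * m).choose m : ℕ) : ℂ)
      = ((orderedPartitions k m).card : ℂ) * (k : ℂ) ^ m := by
    have := congrArg (Nat.cast : ℕ → ℂ) hmul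
    push_cast at this ⊢
    linear_combination this
  have h1 : (((k * m).choose m : ℕ) : ℂ) ≠ 0 := Nat.cast_ne_zero.2 hC.ne'
  have h2 : ((orderedPartitions k m).card : ℂ) ≠ 0 := Nat.cast_ne_zero.2 hOP.ne'
  have key : (k : ℂ) ^ m / (((k * m).choose m : ℕ) : ℂ)
      = ((orderedPartitions k m).card : ℂ)⁻¹ * (splitCount k m A : ℂ) := by
    field_simp
    linear_combination -hmulC
  rw [← key]

end algebra

section signs

variable {π : Fin m → Finset (Fin (k * m))}

lemma partition_of (hπ : π ∈ orderedPartitions k m) (A : Finset (Fin (k * m))) :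
    A = univ.biUnion (fun l => A ∩ π l) := by
  ext j
  simp only [Finset.mem_biUnion, mem_univ, true_and, mem_inter]
  exact ⟨fun hj => ⟨blk hπ j, hj, mem_blk hπ j⟩, fun ⟨l, hj, _⟩ => hj⟩

lemma inter_pairwiseDisjoint (hπ : π ∈ orderedPartitions k m) (A : Finset (Fin (k * m))) :
    (↑(univ : Finset (Fin m)) : Set (Fin m)).PairwiseDisjoint (fun l => A ∩ π l) :=
  fun l _ l' _ h =>
    ((mem_OP.1 hπ).2.1 l l' h).mono inter_subset_right inter_subset_right

lemma sum_card_inter (hπ : π ∈ orderedPartitions k m) {A : Finset (Fin (k * m))}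
    (hA : A.card = m) : ∑ l, (A ∩ π l).card = m := by
  calc ∑ l, (A ∩ π l).card = (univ.biUnion (fun l => A ∩ π l)).card :=
        (Finset.card_biUnion (fun l _ l' _ h => inter_pairwiseDisjoint hπ A (mem_univ l)
          (mem_univ l') h)).symm
    _ = A.card := by rw [← partition_of hπ A]
    _ = m := hA

lemma splits_of_forall_odd (hπ : π ∈ orderedPartitions k m) {A : Finset (Fin (k * m))}
    (hA : A.card = m) (h : ∀ l, ¬ Even (A ∩ π l).card) : Splits π A := by
  have h1 : ∀ l ∈ (univ : Finset (Fin m)), 1 ≤ (A ∩ π l).card := by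
    intro l _
    have := h l
    rw [Nat.not_even_iff] at this
    omega
  intro l
  by_contra hne
  have h3 : 3 ≤ (A ∩ π l).card := by
    have := h l
    rw [Nat.not_even_iff] at this
    omega
  have hlt : ∑ _l : Fin m, 1 < ∑ l, (A ∩ π l).card :=
    Finset.sum_lt_sum h1 ⟨l, mem_univ l, by omega⟩
  rw [sum_card_inter hπ hA] at hlt
  simp at hlt

lemma signsum (hπ : π ∈ orderedPartitions k m) {A : Finset (Fin (k * m))} (hA : A.card = m) :
    ∑ ε : Fin m → Bool, (∏ l, (if ε l then (1 : ℂ) else -1)) *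
        ∏ j ∈ A, (if ε (blk hπ j) then (1 : ℂ) else -1)
      = if Splits π A then (2 : ℂ) ^ m else 0 := by
  have step1 : ∀ ε : Fin m → Bool,
      ∏ j ∈ A, (if ε (blk hπ j) then (1 : ℂ) else -1)
        = ∏ l, (if ε l then (1 : ℂ) else -1) ^ (A ∩ π l).card := by
    intro ε
    conv_lhs => rw [partition_of hπ A]
    rw [Finset.prod_biUnion (fun l hl l' hl' h => inter_pairwiseDisjoint hπ A hl hl' h)]
    refine Finset.prod_congr rfl fun l _ => ?_
    rw [Finset.prod_congr rfl (fun j hj => by rw [blk_eq hπ (mem_inter.1 hj).2]),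
      Finset.prod_const]
  have step2 : ∀ ε : Fin m → Bool,
      (∏ l, (if ε l then (1 : ℂ) else -1)) *
        ∏ l, (if ε l then (1 : ℂ) else -1) ^ (A ∩ π l).card
      = ∏ l, (if ε l then (1 : ℂ) else -1) ^ ((A ∩ π l).card + 1) := by
    intro ε
    rw [← Finset.prod_mul_distrib]
    exact Finset.prod_congr rfl fun l _ => by rw [pow_succ, mul_comm]
  rw [Finset.sum_congr rfl fun ε _ => by rw [step1 ε, step2 ε]]
  have swap : ∑ ε : Fin m → Bool, ∏ l, (if ε l then (1 : ℂ) else -1) ^ ((A ∩ π l).card + 1)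
      = ∏ l : Fin m, ∑ b ∈ (univ : Finset Bool),
          (if b then (1 : ℂ) else -1) ^ ((A ∩ π l).card + 1) := by
    rw [Finset.prod_univ_sum]
    rw [Fintype.piFinset_univ]
  rw [swap]
  have factor : ∀ l : Fin m, ∑ b ∈ (univ : Finset Bool),
      (if b then (1 : ℂ) else -1) ^ ((A ∩ π l).card + 1)
      = if Even (A ∩ π l).card then 0 else 2 := by
    intro l
    have hb : ∑ b ∈ (univ : Finset Bool),
        (if b then (1 : ℂ) else -1) ^ ((A ∩ π l).card + 1)
        = 1 + (-1 : ℂ) ^ ((A ∩ π l).card + 1) := by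
      simp [Fintype.sum_bool, add_comm]
    rw [hb]
    by_cases h : Even (A ∩ π l).card
    · rw [if_pos h, Odd.neg_one_pow (by simpa using h.add_one)]
      ring
    · rw [if_neg h, Even.neg_one_pow (by simpa [Nat.even_add_one] using h)]
      ring
  rw [Finset.prod_congr rfl fun l _ => factor l]
  by_cases hs : Splits π A
  · rw [if_pos hs]
    have h2 : ∀ l ∈ (univ : Finset (Fin m)),
        (if Even (A ∩ π l).card then (0 : ℂ) else 2) = 2 := by
      intro l _
      rw [if_neg]
      rw [hs l]
      norm_num
    rw [Finset.prod_congr rfl h2, Finset.prod_const]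
    simp
  · rw [if_neg hs]
    have : ∃ l, Even (A ∩ π l).card := by
      by_contra h
      push_neg at h
      exact hs (splits_of_forall_odd hπ hA h)
    obtain ⟨l, hl⟩ := this
    exact Finset.prod_eq_zero (mem_univ l) (by rw [if_pos hl])

variable {X : Type*} [AddCommGroup X] [Module ℂ X] (x : Finset (Fin (k * m)) → X)

lemma Lsame_sign (hπ : π ∈ orderedPartitions k m) (z : Fin (k * m) → ℂ) :
    ∑ ε : Fin m → Bool, (∏ l, (if ε l then (1 : ℂ) else -1)) •
        Pfun x (fun j => (if ε (blk hπ j) then (1 : ℂ) else -1) * z j)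
      = (2 ^ m : ℂ) • Lsame x π z := by
  calc ∑ ε : Fin m → Bool, (∏ l, (if ε l then (1 : ℂ) else -1)) •
        Pfun x (fun j => (if ε (blk hπ j) then (1 : ℂ) else -1) * z j)
      = ∑ ε : Fin m → Bool,
          ∑ A ∈ univ.filter (fun A : Finset (Fin (k * m)) => A.card = m),
            ((∏ l, (if ε l then (1 : ℂ) else -1)) *
              ∏ j ∈ A, (if ε (blk hπ j) then (1 : ℂ) else -1)) •
                ((∏ j ∈ A, z j) • x A) := by
        refine Finset.sum_congr rfl fun ε _ => ?_
        rw [Pfun, Finset.smul_sum]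
        refine Finset.sum_congr rfl fun A _ => ?_
        rw [smul_smul, smul_smul, Finset.prod_mul_distrib]
        congr 1
        ring
    _ = ∑ A ∈ univ.filter (fun A : Finset (Fin (k * m)) => A.card = m),
          (∑ ε : Fin m → Bool, (∏ l, (if ε l then (1 : ℂ) else -1)) *
              ∏ j ∈ A, (if ε (blk hπ j) then (1 : ℂ) else -1)) •
            ((∏ j ∈ A, z j) • x A) := by
        rw [Finset.sum_comm]
        exact Finset.sum_congr rfl fun A _ => (Finset.sum_smul).symm
    _ = ∑ A ∈ univ.filter (fun A : Finset (Fin (k * m)) => A.card = m),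
          (if Splits π A then (2 : ℂ) ^ m else 0) • ((∏ j ∈ A, z j) • x A) := by
        refine Finset.sum_congr rfl fun A hA => ?_
        rw [signsum hπ (mem_filter.1 hA).2]
    _ = (2 ^ m : ℂ) • Lsame x π z := by
        conv_rhs => rw [Lsame_eq x hπ, Finset.smul_sum, ← Finset.filter_filter,
          Finset.sum_filter]
        refine Finset.sum_congr rfl fun A _ => ?_
        split_ifs with h
        · rfl
        · rw [zero_smul]

end signs

section measure

open Measure

lemma map_eq_pi {Ω : Type*} [MeasureSpace Ω] [IsProbabilityMeasure (ℙ : Measure Ω)]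
    {ι : Type*} [Fintype ι] (f : ι → Ω → ℂ) (hmeas : ∀ i, Measurable (f i))
    (hindep : iIndepFun f ℙ) :
    Measure.map (fun ω i => f i ω) ℙ = Measure.pi (fun i => Measure.map (f i) ℙ) := by
  haveI : ∀ i, IsProbabilityMeasure (Measure.map (f i) ℙ) :=
    fun i => Measure.isProbabilityMeasure_map (hmeas i).aemeasurable
  refine (Measure.pi_eq fun s hs => ?_).symm
  rw [Measure.map_apply (measurable_pi_lambda _ fun i => hmeas i) (MeasurableSet.univ_pi hs)]
  have hpre : (fun ω i => f i ω) ⁻¹' (Set.pi Set.univ s)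
      = ⋂ i ∈ (univ : Finset ι), f i ⁻¹' (s i) := by
    ext ω
    simp [Set.mem_pi]
  rw [hpre, hindep.measure_inter_preimage_eq_mul univ (fun i _ => hs i)]
  exact Finset.prod_congr rfl fun i _ => (Measure.map_apply (hmeas i) (hs i)).symm

lemma map_comp_perm {ι : Type*} [Fintype ι] (ν : ι → Measure ℂ)
    [∀ i, IsProbabilityMeasure (ν i)] (σ : Equiv.Perm ι) (hσ : ∀ q, ν (σ q) = ν q) :
    Measure.map (fun (y : ι → ℂ) q => y (σ q)) (Measure.pi ν) = Measure.pi ν := by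
  have h := MeasureTheory.measurePreserving_piCongrLeft (α := fun _ : ι => ℂ) ν σ.symm
  have hcoe : ⇑(MeasurableEquiv.piCongrLeft (fun _ : ι => ℂ) σ.symm)
      = fun (y : ι → ℂ) q => y (σ q) := by
    rw [MeasurableEquiv.coe_piCongrLeft]
    funext y b
    have h1 := Equiv.piCongrLeft_apply_apply (fun _ : ι => ℂ) σ.symm y (σ b)
    rw [σ.symm_apply_apply b] at h1
    exact h1
  have hpi : (Measure.pi fun q => ν (σ.symm q)) = Measure.pi ν := by
    congr 1
    funext q
    rw [← hσ (σ.symm q), Equiv.apply_symm_apply]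
  rw [hcoe, hpi] at h
  exact h.map_eq

lemma map_mul_fun {ι : Type*} [Fintype ι] (ν : ι → Measure ℂ)
    [∀ i, IsProbabilityMeasure (ν i)] (c : ι → ℂ)
    (hc : ∀ q, Measure.map (fun t => c q * t) (ν q) = ν q) :
    Measure.map (fun (y : ι → ℂ) q => c q * y q) (Measure.pi ν) = Measure.pi ν :=
  (MeasureTheory.measurePreserving_pi ν ν
    (fun q => ⟨measurable_const_mul _, hc q⟩)).map_eq

end measure

section cont

variable {X : Type*} [NormedAddCommGroup X] [NormedSpace ℂ X]
  (x : Finset (Fin (k * m)) → X)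

lemma continuous_Pfun : Continuous (Pfun x : (Fin (k * m) → ℂ) → X) := by
  refine continuous_finset_sum _ fun A _ => ?_
  refine Continuous.smul ?_ (continuous_const : Continuous fun _ => x A)
  exact continuous_finset_prod _ fun j _ => continuous_apply j

/-- the decoupled multilinear form as a function of the matrix of variables -/
def Lfun (π : Fin m → Finset (Fin (k * m))) (y : Fin m × Fin (k * m) → ℂ) : X :=
  ∑ i ∈ Fintype.piFinset (fun l => π l), (∏ l, y (l, i l)) • x (Finset.image i univ)

lemma continuous_Lfun (π : Fin m → Finset (Fin (k * m))) : Continuous (Lfun x π) := by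
  refine continuous_finset_sum _ fun i _ => ?_
  refine Continuous.smul ?_ (continuous_const : Continuous fun _ => x (Finset.image i univ))
  exact continuous_finset_prod _ fun l _ => continuous_apply _

lemma continuous_Lsame (π : Fin m → Finset (Fin (k * m))) :
    Continuous (fun z => Lsame x π z) := by
  refine continuous_finset_sum _ fun i _ => ?_
  refine Continuous.smul ?_ (continuous_const : Continuous fun _ => x (Finset.image i univ))
  exact continuous_finset_prod _ fun l _ => continuous_apply _

end cont

section jensen

lemma jensen_avg {X : Type*} [NormedAddCommGroup X] [NormedSpace ℝ X] {Φ : X → ℝ}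
    (hΦconv : ConvexOn ℝ Set.univ Φ) {ι : Type*} (s : Finset ι) (hs : s.Nonempty)
    (v : ι → X) :
    Φ ((s.card : ℝ)⁻¹ • ∑ i ∈ s, v i) ≤ (s.card : ℝ)⁻¹ * ∑ i ∈ s, Φ (v i) := by
  have hcard : (0 : ℝ) < s.card := by
    exact_mod_cast Finset.card_pos.2 hs
  have hw : ∑ _i ∈ s, ((s.card : ℝ))⁻¹ = 1 := by
    rw [Finset.sum_const, nsmul_eq_mul, mul_inv_cancel₀ hcard.ne']
  have h := hΦconv.map_sum_le (fun i _ => by positivity) hw (fun i _ => Set.mem_univ (v i))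
  rw [Finset.smul_sum, Finset.mul_sum]
  simpa using h

end jensen

section perm

variable {π : Fin m → Finset (Fin (k * m))}

/-- involution swapping row `0` with the row of the block containing each column -/
def sigmafun (hπ : π ∈ orderedPartitions k m) (hm : 0 < m)
    (q : Fin m × Fin (k * m)) : Fin m × Fin (k * m) :=
  if q.1 = ⟨0, hm⟩ then (blk hπ q.2, q.2)
  else if q.1 = blk hπ q.2 then (⟨0, hm⟩, q.2) else q

lemma sigmafun_involutive (hπ : π ∈ orderedPartitions k m) (hm : 0 < m) :
    Function.Involutive (sigmafun hπ hm) := by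
  rintro ⟨l, j⟩
  unfold sigmafun
  by_cases h1 : l = (⟨0, hm⟩ : Fin m)
  · subst h1
    rw [if_pos rfl]
    by_cases h2 : blk hπ j = (⟨0, hm⟩ : Fin m)
    · simp only [h2, if_pos rfl]
      simp
    · simp only [if_neg h2, if_pos rfl]
      simp
  · rw [if_neg h1]
    by_cases h2 : l = blk hπ j
    · rw [if_pos h2, if_pos rfl, ← h2]
    · rw [if_neg h2, if_neg h1, if_neg h2]

/-- the corresponding permutation -/
def sigmaperm (hπ : π ∈ orderedPartitions k m) (hm : 0 < m) :
    Equiv.Perm (Fin m × Fin (k * m)) :=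
  (sigmafun_involutive hπ hm).toPerm

lemma sigmaperm_apply (hπ : π ∈ orderedPartitions k m) (hm : 0 < m)
    (q : Fin m × Fin (k * m)) : sigmaperm hπ hm q = sigmafun hπ hm q := rfl

lemma sigmaperm_snd (hπ : π ∈ orderedPartitions k m) (hm : 0 < m)
    (q : Fin m × Fin (k * m)) : (sigmaperm hπ hm q).2 = q.2 := by
  rw [sigmaperm_apply]
  unfold sigmafun
  split_ifs <;> rfl

lemma sigmaperm_mem (hπ : π ∈ orderedPartitions k m) (hm : 0 < m)
    {l : Fin m} {j : Fin (k * m)} (hj : j ∈ π l) :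
    sigmaperm hπ hm (l, j) = (⟨0, hm⟩, j) := by
  rw [sigmaperm_apply]
  unfold sigmafun
  have hb : blk hπ j = l := blk_eq hπ hj
  by_cases h1 : l = (⟨0, hm⟩ : Fin m)
  · subst h1
    rw [if_pos rfl, hb]
  · rw [if_neg h1, if_pos (by rw [hb])]

end perm

end Stmt13Aux

open Stmt13Aux in
/-- Decoupling in partitions for convex symmetric functions:
`E Φ((kᵐ/C(km,m)) P(ξ)) ≤ avg_π E Φ(L_π(ξ⁽¹⁾,…,ξ⁽ᵐ⁾)) ≤ E Φ(P(ξ))`,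
where `P(z) = ∑_{|A|=m} x_A z_A` is tetrahedral `m`-homogeneous,
`L_π(z⁽¹⁾,…,z⁽ᵐ⁾) = ∑_{i₁∈B₁}⋯∑_{iₘ∈Bₘ} x_{{i₁,…,iₘ}} z⁽¹⁾_{i₁}⋯z⁽ᵐ⁾_{iₘ}`,
and the `η l j` (for `l` ranging over copies, `j` over coordinates) are
independent symmetric random variables, identically distributed across copies;
`ξ := η 0` serves as the base random vector. -/
theorem stmt_13 {Ω : Type*} [MeasureSpace Ω] [IsProbabilityMeasure (ℙ : Measure Ω)]
    {X : Type*} [NormedAddCommGroup X] [NormedSpace ℂ X]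
    (k m : ℕ) (hk : 0 < k) (hm : 0 < m)
    (x : Finset (Fin (k * m)) → X)
    (Φ : X → ℝ) (hΦconv : ConvexOn ℝ Set.univ Φ) (hΦ0 : ∀ y, 0 ≤ Φ y)
    (hΦeven : ∀ y, Φ (-y) = Φ y) (hΦcont : Continuous Φ)
    (η : Fin m → Fin (k * m) → Ω → ℂ)
    (hmeas : ∀ l j, Measurable (η l j))
    (hindep : iIndepFun
      (fun q : Fin m × Fin (k * m) => η q.1 q.2) ℙ)
    (hid : ∀ l l' j, Measure.map (η l j) ℙ = Measure.map (η l' j) ℙ)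
    (hsymm : ∀ l j, Measure.map (η l j) ℙ = Measure.map (fun ω => -η l j ω) ℙ)
    (hintP : Integrable (fun ω =>
      Φ (∑ A ∈ Finset.univ.filter (fun A : Finset (Fin (k * m)) => A.card = m),
        (∏ j ∈ A, η ⟨0, hm⟩ j ω) • x A)))
    (hintL : ∀ π ∈ orderedPartitions k m, Integrable (fun ω =>
      Φ (∑ i ∈ Fintype.piFinset (fun l => π l),
        (∏ l, η l (i l) ω) • x (Finset.image i Finset.univ)))) :
    (∫ ω, Φ ((((k : ℂ) ^ m) / (((k * m).choose m : ℕ) : ℂ)) •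
        ∑ A ∈ Finset.univ.filter (fun A : Finset (Fin (k * m)) => A.card = m),
          (∏ j ∈ A, η ⟨0, hm⟩ j ω) • x A)
      ≤ ((orderedPartitions k m).card : ℝ)⁻¹ *
          ∑ π ∈ orderedPartitions k m,
            ∫ ω, Φ (∑ i ∈ Fintype.piFinset (fun l => π l),
              (∏ l, η l (i l) ω) • x (Finset.image i Finset.univ))) ∧
    ((orderedPartitions k m).card : ℝ)⁻¹ *
        ∑ π ∈ orderedPartitions k m,
          ∫ ω, Φ (∑ i ∈ Fintype.piFinset (fun l => π l),
            (∏ l, η l (i l) ω) • x (Finset.image i Finset.univ))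
      ≤ ∫ ω, Φ (∑ A ∈ Finset.univ.filter (fun A : Finset (Fin (k * m)) => A.card = m),
          (∏ j ∈ A, η ⟨0, hm⟩ j ω) • x A) := by
  classical
  set l0 : Fin m := ⟨0, hm⟩ with hl0
  let ν : Fin m × Fin (k * m) → Measure ℂ := fun q => Measure.map (η q.1 q.2) ℙ
  haveI hprob : ∀ q : Fin m × Fin (k * m), IsProbabilityMeasure (ν q) :=
    fun q => Measure.isProbabilityMeasure_map (hmeas q.1 q.2).aemeasurable
  let μ : Measure ((Fin m × Fin (k * m)) → ℂ) := Measure.pi ν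
  let ρ : Ω → (Fin m × Fin (k * m)) → ℂ := fun ω q => η q.1 q.2 ω
  have hρmeas : Measurable ρ := measurable_pi_lambda _ fun q => hmeas q.1 q.2
  have hmap : Measure.map ρ ℙ = μ := map_eq_pi _ (fun q => hmeas q.1 q.2) hindep
  let row0 : ((Fin m × Fin (k * m)) → ℂ) → (Fin (k * m) → ℂ) := fun y j => y (l0, j)
  have hrow0 : Continuous row0 := continuous_pi fun j => continuous_apply _
  -- transfer along ρ
  have transfer : ∀ F : ((Fin m × Fin (k * m)) → ℂ) → X, Continuous F →
      ∫ ω, Φ (F (ρ ω)) = ∫ y, Φ (F y) ∂μ := fun F hF => by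
    rw [← hmap]
    exact (integral_map hρmeas.aemeasurable
      (hΦcont.comp hF).aestronglyMeasurable).symm
  have transferInt : ∀ F : ((Fin m × Fin (k * m)) → ℂ) → X, Continuous F →
      (Integrable (fun ω => Φ (F (ρ ω))) ℙ ↔ Integrable (fun y => Φ (F y)) μ) :=
    fun F hF => by
      rw [← hmap]
      exact (integrable_map_measure (hΦcont.comp hF).aestronglyMeasurable
        hρmeas.aemeasurable).symm
  -- invariance transfer on μ
  have inv_transfer : ∀ T : ((Fin m × Fin (k * m)) → ℂ) → ((Fin m × Fin (k * m)) → ℂ),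
      Measurable T → Measure.map T μ = μ →
      ∀ F : ((Fin m × Fin (k * m)) → ℂ) → X, Continuous F →
      (∫ y, Φ (F y) ∂μ = ∫ y, Φ (F (T y)) ∂μ) ∧
      (Integrable (fun y => Φ (F y)) μ → Integrable (fun y => Φ (F (T y))) μ) := by
    intro T hT hmapT F hF
    have hsm : AEStronglyMeasurable (fun y => Φ (F y)) (Measure.map T μ) :=
      (hΦcont.comp hF).aestronglyMeasurable
    constructor
    · conv_lhs => rw [← hmapT]
      exact integral_map hT.aemeasurable hsm
    · intro h
      exact (integrable_map_measure hsm hT.aemeasurable).1 (by rwa [hmapT])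
  -- reindexing by the block permutation
  have reindex : ∀ (π : Fin m → Finset (Fin (k * m))) (hπ : π ∈ orderedPartitions k m),
      (∫ y, Φ (Lfun x π y) ∂μ = ∫ y, Φ (Lsame x π (row0 y)) ∂μ) ∧
      (Integrable (fun y => Φ (Lfun x π y)) μ →
        Integrable (fun y => Φ (Lsame x π (row0 y))) μ) := by
    intro π hπ
    have hν : ∀ q, ν ((sigmaperm hπ hm) q) = ν q := by
      intro q
      show Measure.map (η (sigmaperm hπ hm q).1 (sigmaperm hπ hm q).2) ℙ
        = Measure.map (η q.1 q.2) ℙ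
      rw [sigmaperm_snd hπ hm q]
      exact hid _ _ _
    have hmapT : Measure.map
        (fun (y : (Fin m × Fin (k * m)) → ℂ) q => y (sigmaperm hπ hm q)) μ = μ :=
      map_comp_perm ν (sigmaperm hπ hm) hν
    have hTmeas : Measurable
        (fun (y : (Fin m × Fin (k * m)) → ℂ) q => y (sigmaperm hπ hm q)) :=
      measurable_pi_lambda _ fun q => measurable_pi_apply _
    have hcomp : ∀ y : (Fin m × Fin (k * m)) → ℂ,
        Lfun x π (fun q => y (sigmaperm hπ hm q)) = Lsame x π (row0 y) := by
      intro y
      refine Finset.sum_congr rfl fun i hi => ?_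
      congr 1
      refine Finset.prod_congr rfl fun l _ => ?_
      show y (sigmaperm hπ hm (l, i l)) = y (l0, i l)
      rw [sigmaperm_mem hπ hm (Fintype.mem_piFinset.1 hi l)]
    have h := inv_transfer _ hTmeas hmapT (Lfun x π) (continuous_Lfun x π)
    exact ⟨h.1.trans (by simp only [hcomp]), fun hint => by simpa only [hcomp] using h.2 hint⟩
  -- sign flips
  have signflip : ∀ (π : Fin m → Finset (Fin (k * m))) (hπ : π ∈ orderedPartitions k m)
      (ε : Fin m → Bool),
      (∫ y, Φ (Pfun x (row0 y)) ∂μ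
        = ∫ y, Φ (Pfun x (fun j => (if ε (blk hπ j) then (1 : ℂ) else -1) * row0 y j)) ∂μ) ∧
      (Integrable (fun y => Φ (Pfun x (row0 y))) μ →
        Integrable (fun y =>
          Φ (Pfun x (fun j => (if ε (blk hπ j) then (1 : ℂ) else -1) * row0 y j))) μ) := by
    intro π hπ ε
    set c : Fin m × Fin (k * m) → ℂ := fun q => if ε (blk hπ q.2) then 1 else -1 with hcdef
    have hcq : ∀ q, Measure.map (fun t => c q * t) (ν q) = ν q := by
      intro q
      by_cases h : ε (blk hπ q.2)
      · have h1 : (fun t : ℂ => c q * t) = id := by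
          funext t
          simp [hcdef, h]
        rw [h1, Measure.map_id]
      · have h1 : (fun t : ℂ => c q * t) = fun t => -t := by
          funext t
          simp [hcdef, h]
        rw [h1]
        show Measure.map Neg.neg (Measure.map (η q.1 q.2) ℙ) = Measure.map (η q.1 q.2) ℙ
        rw [Measure.map_map measurable_neg (hmeas q.1 q.2)]
        have h2 : (Neg.neg ∘ η q.1 q.2) = fun ω => - η q.1 q.2 ω := rfl
        rw [h2, ← hsymm q.1 q.2]
    have hmapS := map_mul_fun ν c hcq
    have hSmeas : Measurable (fun (y : (Fin m × Fin (k * m)) → ℂ) q => c q * y q) :=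
      measurable_pi_lambda _ fun q => (measurable_pi_apply q).const_mul _
    have h := inv_transfer _ hSmeas hmapS (fun y => Pfun x (row0 y))
      ((continuous_Pfun x).comp hrow0)
    have hcomp : ∀ y : (Fin m × Fin (k * m)) → ℂ,
        Pfun x (row0 (fun q => c q * y q))
          = Pfun x (fun j => (if ε (blk hπ j) then (1 : ℂ) else -1) * row0 y j) := fun y => rfl
    exact ⟨h.1.trans (by simp only [hcomp]), fun hint => by simpa only [hcomp] using h.2 hint⟩
  -- integrability
  have hPint : Integrable (fun y => Φ (Pfun x (row0 y))) μ :=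
    (transferInt (fun y => Pfun x (row0 y)) ((continuous_Pfun x).comp hrow0)).1 hintP
  have hLint : ∀ (π : Fin m → Finset (Fin (k * m))) (hπ : π ∈ orderedPartitions k m),
      Integrable (fun y => Φ (Lsame x π (row0 y))) μ := fun π hπ =>
    (reindex π hπ).2 ((transferInt (Lfun x π) (continuous_Lfun x π)).1 (hintL π hπ))
  -- pointwise Jensen 1
  have hOPne : (orderedPartitions k m).Nonempty := OP_nonempty hk
  have hOPcard : (0 : ℝ) < ((orderedPartitions k m).card : ℝ) := by
    exact_mod_cast Finset.card_pos.2 hOPne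
  have point1 : ∀ z : Fin (k * m) → ℂ,
      Φ ((((k : ℂ) ^ m) / (((k * m).choose m : ℕ) : ℂ)) • Pfun x z)
        ≤ (((orderedPartitions k m).card : ℝ))⁻¹ *
            ∑ π ∈ orderedPartitions k m, Φ (Lsame x π z) := by
    intro z
    rw [avg_Lsame x hk z]
    have hcast : (((((orderedPartitions k m).card : ℝ))⁻¹ : ℝ) : ℂ)
        = (((orderedPartitions k m).card : ℂ))⁻¹ := by
      rw [Complex.ofReal_inv, Complex.ofReal_natCast]
    rw [← hcast, Complex.coe_smul]
    exact jensen_avg hΦconv _ hOPne _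
  -- pointwise Jensen 2
  have hcard2 : (((univ : Finset (Fin m → Bool)).card : ℝ)) = (2 : ℝ) ^ m := by
    rw [Finset.card_univ]
    simp
  have point2 : ∀ (π : Fin m → Finset (Fin (k * m))) (hπ : π ∈ orderedPartitions k m)
      (z : Fin (k * m) → ℂ),
      Φ (Lsame x π z) ≤ (((2 : ℝ) ^ m))⁻¹ * ∑ ε : Fin m → Bool,
        Φ (Pfun x (fun j => (if ε (blk hπ j) then (1 : ℂ) else -1) * z j)) := by
    intro π hπ z
    have h2m : ((2 : ℂ) ^ m) ≠ 0 := pow_ne_zero _ two_ne_zero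
    have hrep : Lsame x π z = ((2 : ℂ) ^ m)⁻¹ • ∑ ε : Fin m → Bool,
        (∏ l, (if ε l then (1 : ℂ) else -1)) •
          Pfun x (fun j => (if ε (blk hπ j) then (1 : ℂ) else -1) * z j) := by
      rw [Lsame_sign x hπ z, inv_smul_smul₀ h2m]
    rw [hrep]
    have hcast : ((((2 : ℝ) ^ m)⁻¹ : ℝ) : ℂ) = ((2 : ℂ) ^ m)⁻¹ := by
      rw [Complex.ofReal_inv, Complex.ofReal_pow, Complex.ofReal_ofNat]
    rw [← hcast, Complex.coe_smul, ← hcard2]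
    refine le_trans (jensen_avg hΦconv univ univ_nonempty _) ?_
    have hsg : ∀ ε : Fin m → Bool,
        Φ ((∏ l, (if ε l then (1 : ℂ) else -1)) •
            Pfun x (fun j => (if ε (blk hπ j) then (1 : ℂ) else -1) * z j))
          = Φ (Pfun x (fun j => (if ε (blk hπ j) then (1 : ℂ) else -1) * z j)) := by
      intro ε
      have hsq : (∏ l, (if ε l then (1 : ℂ) else -1)) *
          (∏ l, (if ε l then (1 : ℂ) else -1)) = 1 := by
        rw [← Finset.prod_mul_distrib]
        exact Finset.prod_eq_one fun l _ => by split_ifs <;> norm_num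
      rcases mul_self_eq_one_iff.1 hsq with h | h
      · rw [h, one_smul]
      · rw [h, neg_one_smul]
        exact hΦeven _
    exact le_of_eq (by rw [Finset.sum_congr rfl fun ε _ => hsg ε])
  -- first inequality
  have goal1 : ∫ ω, Φ ((((k : ℂ) ^ m) / (((k * m).choose m : ℕ) : ℂ)) •
        ∑ A ∈ Finset.univ.filter (fun A : Finset (Fin (k * m)) => A.card = m),
          (∏ j ∈ A, η l0 j ω) • x A)
      ≤ ((orderedPartitions k m).card : ℝ)⁻¹ *
          ∑ π ∈ orderedPartitions k m,
            ∫ ω, Φ (∑ i ∈ Fintype.piFinset (fun l => π l),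
              (∏ l, η l (i l) ω) • x (Finset.image i Finset.univ)) := by
    calc ∫ ω, Φ ((((k : ℂ) ^ m) / (((k * m).choose m : ℕ) : ℂ)) •
            ∑ A ∈ Finset.univ.filter (fun A : Finset (Fin (k * m)) => A.card = m),
              (∏ j ∈ A, η l0 j ω) • x A)
        = ∫ y, Φ ((((k : ℂ) ^ m) / (((k * m).choose m : ℕ) : ℂ)) • Pfun x (row0 y)) ∂μ :=
          transfer (fun y => (((k : ℂ) ^ m) / (((k * m).choose m : ℕ) : ℂ)) •
            Pfun x (row0 y)) (((continuous_Pfun x).comp hrow0).const_smul _)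
      _ ≤ ∫ y, ((((orderedPartitions k m).card : ℝ))⁻¹ *
            ∑ π ∈ orderedPartitions k m, Φ (Lsame x π (row0 y))) ∂μ := by
          refine integral_mono_of_nonneg (Filter.Eventually.of_forall fun y => hΦ0 _) ?_
            (Filter.Eventually.of_forall fun y => point1 (row0 y))
          exact ((integrable_finset_sum _ (fun π hπ => hLint π hπ)).const_mul _)
      _ = (((orderedPartitions k m).card : ℝ))⁻¹ *
            ∑ π ∈ orderedPartitions k m, ∫ y, Φ (Lsame x π (row0 y)) ∂μ := by
          rw [integral_const_mul, integral_finset_sum _ (fun π hπ => hLint π hπ)]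
      _ = ((orderedPartitions k m).card : ℝ)⁻¹ *
          ∑ π ∈ orderedPartitions k m,
            ∫ ω, Φ (∑ i ∈ Fintype.piFinset (fun l => π l),
              (∏ l, η l (i l) ω) • x (Finset.image i Finset.univ)) := by
          congr 1
          refine Finset.sum_congr rfl fun π hπ => ?_
          rw [← (reindex π hπ).1]
          exact (transfer (Lfun x π) (continuous_Lfun x π)).symm
  -- second inequality
  have goal2 : ((orderedPartitions k m).card : ℝ)⁻¹ *
        ∑ π ∈ orderedPartitions k m,
          ∫ ω, Φ (∑ i ∈ Fintype.piFinset (fun l => π l),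
            (∏ l, η l (i l) ω) • x (Finset.image i Finset.univ))
      ≤ ∫ ω, Φ (∑ A ∈ Finset.univ.filter (fun A : Finset (Fin (k * m)) => A.card = m),
          (∏ j ∈ A, η l0 j ω) • x A) := by
    have h2pos : (0 : ℝ) < (2 : ℝ) ^ m := by positivity
    have hIπ : ∀ π ∈ orderedPartitions k m,
        ∫ ω, Φ (∑ i ∈ Fintype.piFinset (fun l => π l),
          (∏ l, η l (i l) ω) • x (Finset.image i Finset.univ))
        ≤ ∫ ω, Φ (∑ A ∈ Finset.univ.filter (fun A : Finset (Fin (k * m)) => A.card = m),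
          (∏ j ∈ A, η l0 j ω) • x A) := by
      intro π hπ
      have step : ∫ y, Φ (Lsame x π (row0 y)) ∂μ ≤ ∫ y, Φ (Pfun x (row0 y)) ∂μ := by
        calc ∫ y, Φ (Lsame x π (row0 y)) ∂μ
            ≤ ∫ y, ((((2 : ℝ) ^ m))⁻¹ * ∑ ε : Fin m → Bool,
                Φ (Pfun x (fun j => (if ε (blk hπ j) then (1 : ℂ) else -1) * row0 y j))) ∂μ := by
              refine integral_mono_of_nonneg (Filter.Eventually.of_forall fun y => hΦ0 _) ?_
                (Filter.Eventually.of_forall fun y => point2 π hπ (row0 y))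
              exact ((integrable_finset_sum _
                (fun ε _ => (signflip π hπ ε).2 hPint)).const_mul _)
          _ = (((2 : ℝ) ^ m))⁻¹ * ∑ ε : Fin m → Bool, ∫ y,
                Φ (Pfun x (fun j => (if ε (blk hπ j) then (1 : ℂ) else -1) * row0 y j)) ∂μ := by
              rw [integral_const_mul, integral_finset_sum _
                (fun ε _ => (signflip π hπ ε).2 hPint)]
          _ = (((2 : ℝ) ^ m))⁻¹ * ∑ _ε : Fin m → Bool, ∫ y, Φ (Pfun x (row0 y)) ∂μ := by
              congr 1
              exact Finset.sum_congr rfl fun ε _ => ((signflip π hπ ε).1).symm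
          _ = ∫ y, Φ (Pfun x (row0 y)) ∂μ := by
              rw [Finset.sum_const, nsmul_eq_mul, ← hcard2]
              rw [← mul_assoc, hcard2, inv_mul_cancel₀ h2pos.ne', one_mul]
      calc ∫ ω, Φ (∑ i ∈ Fintype.piFinset (fun l => π l),
            (∏ l, η l (i l) ω) • x (Finset.image i Finset.univ))
          = ∫ y, Φ (Lfun x π y) ∂μ := transfer (Lfun x π) (continuous_Lfun x π)
        _ = ∫ y, Φ (Lsame x π (row0 y)) ∂μ := (reindex π hπ).1
        _ ≤ ∫ y, Φ (Pfun x (row0 y)) ∂μ := step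
        _ = ∫ ω, Φ (∑ A ∈ Finset.univ.filter
              (fun A : Finset (Fin (k * m)) => A.card = m),
              (∏ j ∈ A, η l0 j ω) • x A) :=
            (transfer (fun y => Pfun x (row0 y)) ((continuous_Pfun x).comp hrow0)).symm
    have hsum := Finset.sum_le_card_nsmul (orderedPartitions k m) _ _ hIπ
    have hstep : ((orderedPartitions k m).card : ℝ)⁻¹ *
        ∑ π ∈ orderedPartitions k m,
          ∫ ω, Φ (∑ i ∈ Fintype.piFinset (fun l => π l),
            (∏ l, η l (i l) ω) • x (Finset.image i Finset.univ))
        ≤ ((orderedPartitions k m).card : ℝ)⁻¹ *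
          ((orderedPartitions k m).card •
            ∫ ω, Φ (∑ A ∈ Finset.univ.filter
              (fun A : Finset (Fin (k * m)) => A.card = m),
              (∏ j ∈ A, η l0 j ω) • x A)) :=
      mul_le_mul_of_nonneg_left hsum (by positivity)
    refine hstep.trans (le_of_eq ?_)
    rw [nsmul_eq_mul, ← mul_assoc, inv_mul_cancel₀ hOPcard.ne', one_mul]
  exact ⟨goal1, goal2⟩
end
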